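/- Let h₀ > 0, let n be a real number with n ∉ {2, 3, 4}, and let f₀, λ, c, c₁, c₀ be real numbers satisfying c² = λ + f₀·c₁. Define F(x) := (2c/√h₀)·x^(2−n/2)/((2−n)(2−n/2)) + (f₀/h₀)·x^(3−n)/((2−n)²(3−n)) + c₁·x + c₀ for x > 0. Then F″(x) = (c/√h₀)·x^(−n/2) + (f₀/h₀)·x^(1−n)/(2−n) and h₀·xⁿ·(F″(x))² = λ + f₀·F′(x) for all x > 0. -/

import Mathlib

theorem stmt_5 (h₀ f₀ lam c c₁ c₀ n : ℝ) (hh₀ : 0 < h₀)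
    (hn2 : n ≠ 2) (hn3 : n ≠ 3) (hn4 : n ≠ 4)
    (hc : c ^ 2 = lam + f₀ * c₁)
    (F : ℝ → ℝ)
    (hF : ∀ x : ℝ, 0 < x →
      F x = (2 * c / Real.sqrt h₀) * x ^ (2 - n / 2) / ((2 - n) * (2 - n / 2))
        + (f₀ / h₀) * x ^ (3 - n) / ((2 - n) ^ 2 * (3 - n)) + c₁ * x + c₀) :
    ∀ x : ℝ, 0 < x →
      deriv (deriv F) x = (c / Real.sqrt h₀) * x ^ (-n / 2)
          + (f₀ / h₀) * x ^ (1 - n) / (2 - n) ∧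
      h₀ * x ^ n * (deriv (deriv F) x) ^ 2 = lam + f₀ * deriv F x := by
  have hs : Real.sqrt h₀ ≠ 0 := by positivity
  have hs2 : Real.sqrt h₀ * Real.sqrt h₀ = h₀ := Real.mul_self_sqrt hh₀.le
  have hn2' : (2:ℝ) - n ≠ 0 := sub_ne_zero.mpr (fun h => hn2 h.symm)
  have hn3' : (3:ℝ) - n ≠ 0 := sub_ne_zero.mpr (fun h => hn3 h.symm)
  have hn4' : (2:ℝ) - n/2 ≠ 0 := fun h => hn4 (by linarith)
  set s := Real.sqrt h₀ with hsdef
  set A := (2 * c / s) / ((2 - n) * (2 - n / 2)) with hA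
  set B := (f₀ / h₀) / ((2 - n) ^ 2 * (3 - n)) with hB
  set G := fun y : ℝ => A * y ^ (2 - n/2) + B * y ^ (3 - n) + c₁ * y + c₀ with hG
  set G' := fun y : ℝ => A * (2 - n/2) * y ^ (1 - n/2) + B * (3 - n) * y ^ (2 - n) + c₁ with hG'
  set G'' := fun y : ℝ => A * (2 - n/2) * (1 - n/2) * y ^ (-n/2)
      + B * (3 - n) * (2 - n) * y ^ (1 - n) with hG''
  have hpow : ∀ (p y : ℝ), 0 < y → HasDerivAt (fun t : ℝ => t ^ p) (p * y ^ (p-1)) y :=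
    fun p y hy => Real.hasDerivAt_rpow_const (Or.inl hy.ne')
  have hGd : ∀ y : ℝ, 0 < y → HasDerivAt G (G' y) y := by
    intro y hy
    have h1 : HasDerivAt (fun t : ℝ => A * t ^ (2 - n/2)) (A * (2 - n/2) * y ^ (1 - n/2)) y := by
      have := (hpow (2 - n/2) y hy).const_mul A
      refine this.congr_deriv ?_
      rw [show (2 - n/2) - 1 = 1 - n/2 by ring]; ring
    have h2 : HasDerivAt (fun t : ℝ => B * t ^ (3 - n)) (B * (3 - n) * y ^ (2 - n)) y := by
      have := (hpow (3 - n) y hy).const_mul B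
      refine this.congr_deriv ?_
      rw [show (3 - n) - 1 = 2 - n by ring]; ring
    have h3 : HasDerivAt (fun t : ℝ => c₁ * t) c₁ y := by
      simpa using (hasDerivAt_id y).const_mul c₁
    exact ((h1.add h2).add h3).add_const c₀
  have hG'd : ∀ y : ℝ, 0 < y → HasDerivAt G' (G'' y) y := by
    intro y hy
    have h1 : HasDerivAt (fun t : ℝ => A * (2 - n/2) * t ^ (1 - n/2))
        (A * (2 - n/2) * (1 - n/2) * y ^ (-n/2)) y := by
      have := (hpow (1 - n/2) y hy).const_mul (A * (2 - n/2))
      refine this.congr_deriv ?_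
      rw [show (1 - n/2) - 1 = -n/2 by ring]; ring
    have h2 : HasDerivAt (fun t : ℝ => B * (3 - n) * t ^ (2 - n))
        (B * (3 - n) * (2 - n) * y ^ (1 - n)) y := by
      have := (hpow (2 - n) y hy).const_mul (B * (3 - n))
      refine this.congr_deriv ?_
      rw [show (2 - n) - 1 = 1 - n by ring]; ring
    exact (h1.add h2).add_const c₁
  intro x hx
  have hev : F =ᶠ[nhds x] G := by
    filter_upwards [eventually_gt_nhds hx] with y hy
    rw [hF y hy, hG]; ring
  have hdF : deriv F =ᶠ[nhds x] G' := by
    have h1 : deriv F =ᶠ[nhds x] deriv G := hev.deriv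
    have h2 : deriv G =ᶠ[nhds x] G' := by
      filter_upwards [eventually_gt_nhds hx] with y hy
      exact (hGd y hy).deriv
    exact h1.trans h2
  have hddF : deriv (deriv F) x = G'' x := by
    rw [hdF.deriv_eq, (hG'd x hx).deriv]
  have hdFx : deriv F x = G' x := hdF.self_of_nhds
  have hd1 : s * ((2 - n) * (2 - n/2)) ≠ 0 := mul_ne_zero hs (mul_ne_zero hn2' hn4')
  have hd2 : h₀ * ((2 - n)^2 * (3 - n)) ≠ 0 :=
    mul_ne_zero hh₀.ne' (mul_ne_zero (pow_ne_zero 2 hn2') hn3')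
  have cA : A * (2 - n/2) * (1 - n/2) = c / s := by
    rw [hA, div_div, div_mul_eq_mul_div, div_mul_eq_mul_div, div_eq_div_iff hd1 hs]; ring
  have cA' : A * (2 - n/2) = 2 * c / s / (2 - n) := by
    rw [hA, div_div, div_div, div_mul_eq_mul_div,
      div_eq_div_iff hd1 (mul_ne_zero hs hn2')]; ring
  have cB : B * (3 - n) * (2 - n) = (f₀ / h₀) / (2 - n) := by
    rw [hB, div_div, div_div, div_mul_eq_mul_div, div_mul_eq_mul_div,
      div_eq_div_iff hd2 (mul_ne_zero hh₀.ne' hn2')]; ring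
  have cB' : B * (3 - n) = (f₀ / h₀) / (2 - n)^2 := by
    rw [hB, div_div, div_div, div_mul_eq_mul_div,
      div_eq_div_iff hd2 (mul_ne_zero hh₀.ne' (pow_ne_zero 2 hn2'))]; ring
  constructor
  · rw [hddF, hG'']; simp only [cA, cB]; ring
  · rw [hddF, hdFx, hG'', hG']
    simp only [cA, cB, cA', cB']
    have key : ∀ a b : ℝ, x ^ a * x ^ b = x ^ (a+b) :=
      fun a b => (Real.rpow_add hx a b).symm
    have e1 : x ^ n * (x ^ (-n/2) * x ^ (-n/2)) = 1 := by
      rw [key, key, show n + (-n/2 + -n/2) = 0 by ring, Real.rpow_zero]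
    have e2 : x ^ n * (x ^ (-n/2) * x ^ (1-n)) = x ^ (1 - n/2) := by
      rw [key, key]; congr 1; ring
    have e3 : x ^ n * (x ^ (1-n) * x ^ (1-n)) = x ^ (2 - n) := by
      rw [key, key]; congr 1; ring
    set P := x ^ (-n/2) with hP
    set Q := x ^ (1-n) with hQ
    set R1 := x ^ (1 - n/2) with hR1
    set R2 := x ^ (2 - n) with hR2
    set X := x ^ n with hX
    rw [← hs2]
    linear_combination (norm := skip) c^2 * e1 + (2*c*f₀/(s*(2-n))) * e2
      + (f₀^2/((s*s)*(2-n)^2)) * e3 + hc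
    field_simp
    ring
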